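/- Let R be a commutative discrete valuation ring with uniformizer p and let n, m, ℓ be positive integers with n < min(m, ℓ). Consider a short exact sequence 0 → R/P^ℓ → E → R/P^m → 0 of R-modules whose class in Ext¹_R(R/P^m, R/P^ℓ) ≅ R/P^{min(m,ℓ)} lies in the submodule P^n·Ext¹_R(R/P^m, R/P^ℓ). Then the functor Hom_R(−, R/P^n) applied to this short exact sequence yields a short exact sequence of abelian groups. -/

import Mathlib

open CategoryTheory CategoryTheory.Abelian

universe w

section Aux

variable {C : Type*} [Category C] [Abelian C] [HasExt.{w} C]

/-- If `(mk₀ f).comp x = mk₀ ψ` in `Ext _ _ 0`, then `ψ` factors as `f ≫ Φ`, where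
`Φ` is obtained from `x` by applying the homology functor of the derived category. -/
lemma ext0_factor {X X' Y : C} (f : X ⟶ X') (x : Ext.{w} X' Y 0) (ψ : X ⟶ Y)
    (h : (Ext.mk₀ f).comp x (zero_add 0) = Ext.mk₀ ψ) :
    ∃ Φ : X' ⟶ Y, f ≫ Φ = ψ := by
  letI := HasDerivedCategory.standard C
  let G := DerivedCategory.singleFunctor C 0
  let F := DerivedCategory.homologyFunctor C 0
  let e : G ⋙ F ≅ 𝟭 C :=
    Functor.isoWhiskerRight ((SingleFunctors.evaluation _ _ 0).mapIso
      (DerivedCategory.singleFunctorsPostcompQIso C)) F ≪≫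
    Functor.associator _ _ _ ≪≫
    Functor.isoWhiskerLeft (CochainComplex.singleFunctor C 0)
      (DerivedCategory.homologyFunctorFactors C 0) ≪≫
    HomologicalComplex.homologyFunctorSingleIso C (ComplexShape.up ℤ) 0
  have hz : ((0 : ℕ) : ℤ) = 0 := by simp
  let θ : ∀ {A B : C}, Ext.{w} A B 0 → (A ⟶ B) := fun {A B} α =>
    e.inv.app A ≫ F.map (α.hom ≫ (shiftFunctorZero' (DerivedCategory C)
      ((0 : ℕ) : ℤ) hz).hom.app (G.obj B)) ≫ e.hom.app B
  have nat : ∀ {A B : C} (φ : A ⟶ B),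
      e.inv.app A ≫ F.map (G.map φ) ≫ e.hom.app B = φ := by
    intro A B φ
    have h1 := e.hom.naturality φ
    dsimp at h1
    rw [h1, Iso.inv_hom_id_app_assoc]
  have hθ : ∀ {A B : C} (φ : A ⟶ B), θ (Ext.mk₀ φ) = φ := by
    intro A B φ
    dsimp only [θ]
    rw [Ext.mk₀_hom]
    rw [show (ShiftedHom.mk₀ ((0:ℕ):ℤ) hz ((DerivedCategory.singleFunctor C 0).map φ)) ≫
        (shiftFunctorZero' (DerivedCategory C) ((0:ℕ):ℤ) hz).hom.app (G.obj B)
        = G.map φ from by simp [ShiftedHom.mk₀, G]]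
    exact nat φ
  refine ⟨θ x, ?_⟩
  have hcomp : θ ((Ext.mk₀ f).comp x (zero_add 0)) = f ≫ θ x := by
    dsimp only [θ]
    rw [Ext.comp_hom, Ext.mk₀_hom, ShiftedHom.mk₀_comp]
    rw [Category.assoc, Functor.map_comp]
    have h2 := e.inv.naturality f
    dsimp at h2
    simp only [← Category.assoc]
    rw [← h2]
  rw [← hcomp, h, hθ]

end Aux

/-- Let `R` be a commutative DVR with uniformizer `p` and `n < min m ℓ`.  If a short exact
sequence `0 → R/P^ℓ → E → R/P^m → 0` has extension class lying in the submodule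
`P^n · Ext¹_R(R/P^m, R/P^ℓ)`, then `Hom_R(−, R/P^n)` applied to it yields a short exact
sequence of abelian groups. -/
theorem hom_exact_of_extClass_in_radical
    (R : Type) [CommRing R] [IsDomain R] [IsDiscreteValuationRing R]
    (p : R) (hp : IsLocalRing.maximalIdeal R = Ideal.span {p})
    [HasExt.{w} (ModuleCat.{0} R)]
    (n m ℓ : ℕ) (hn : 0 < n) (hmin : n < min m ℓ)
    (S : ShortComplex (ModuleCat.{0} R)) (hS : S.ShortExact)
    (e₁ : S.X₁ ≅ ModuleCat.of R (R ⧸ (IsLocalRing.maximalIdeal R ^ ℓ)))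
    (e₃ : S.X₃ ≅ ModuleCat.of R (R ⧸ (IsLocalRing.maximalIdeal R ^ m)))
    -- the transported extension class of `S` lies in `P^n · Ext¹(R/P^m, R/P^ℓ)` :
    (hclass :
      ((Ext.mk₀ e₃.inv).comp (hS.extClass.comp (Ext.mk₀ e₁.hom) (add_zero 1)) (zero_add 1))
        ∈ AddSubgroup.closure
            {y : Ext (ModuleCat.of R (R ⧸ (IsLocalRing.maximalIdeal R ^ m)))
                   (ModuleCat.of R (R ⧸ (IsLocalRing.maximalIdeal R ^ ℓ))) 1 |
              ∃ r ∈ (IsLocalRing.maximalIdeal R) ^ n,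
              ∃ z : Ext (ModuleCat.of R (R ⧸ (IsLocalRing.maximalIdeal R ^ m)))
                      (ModuleCat.of R (R ⧸ (IsLocalRing.maximalIdeal R ^ ℓ))) 1,
                y = z.comp
                  (Ext.mk₀ (r • 𝟙 (ModuleCat.of R (R ⧸ (IsLocalRing.maximalIdeal R ^ ℓ)))))
                  (add_zero 1)}) :
    Function.Injective
        (fun φ : S.X₃ ⟶ ModuleCat.of R (R ⧸ (IsLocalRing.maximalIdeal R ^ n)) => S.g ≫ φ) ∧
    Function.Exact
        (fun φ : S.X₃ ⟶ ModuleCat.of R (R ⧸ (IsLocalRing.maximalIdeal R ^ n)) => S.g ≫ φ)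
        (fun φ : S.X₂ ⟶ ModuleCat.of R (R ⧸ (IsLocalRing.maximalIdeal R ^ n)) => S.f ≫ φ) ∧
    Function.Surjective
        (fun φ : S.X₂ ⟶ ModuleCat.of R (R ⧸ (IsLocalRing.maximalIdeal R ^ n)) => S.f ≫ φ) := by
  have hepi : Epi S.g := hS.epi_g
  refine ⟨fun a b hab => (cancel_epi S.g).mp hab, ?_, ?_⟩
  · -- exactness in the middle
    intro φ
    constructor
    · intro hφ
      obtain ⟨ψ, hψ⟩ := Limits.CokernelCofork.IsColimit.desc' hS.exact.gIsCokernel φ hφ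
      exact ⟨ψ, hψ⟩
    · rintro ⟨ψ, rfl⟩
      show S.f ≫ S.g ≫ ψ = 0
      rw [← Category.assoc, S.zero, Limits.zero_comp]
  · -- surjectivity
    intro ψ
    -- any `r ∈ P^n` kills any morphism to `N`
    have hsmul : ∀ (r : R), r ∈ (IsLocalRing.maximalIdeal R) ^ n →
        ∀ (χ : ModuleCat.of R (R ⧸ (IsLocalRing.maximalIdeal R ^ ℓ)) ⟶ ModuleCat.of R (R ⧸ (IsLocalRing.maximalIdeal R ^ n))), r • χ = 0 := by
      intro r hr χ
      ext1; refine LinearMap.ext fun a => ?_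
      show r • (χ.hom a) = 0
      obtain ⟨b, hb⟩ := Submodule.Quotient.mk_surjective _ (χ.hom a)
      rw [← hb, ← Submodule.Quotient.mk_smul, Submodule.Quotient.mk_eq_zero]
      rw [smul_eq_mul]
      exact Ideal.mul_mem_right b _ hr
    -- the transported class composes to zero with any morphism to `N`
    have key : ∀ (χ : ModuleCat.of R (R ⧸ (IsLocalRing.maximalIdeal R ^ ℓ)) ⟶ ModuleCat.of R (R ⧸ (IsLocalRing.maximalIdeal R ^ n))),
        (((Ext.mk₀ e₃.inv).comp (hS.extClass.comp (Ext.mk₀ e₁.hom) (add_zero 1))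
          (zero_add 1)).comp (Ext.mk₀ χ) (add_zero 1)) = 0 := by
      intro χ
      let Φ := Ext.postcomp (Ext.mk₀ χ) (ModuleCat.of R (R ⧸ (IsLocalRing.maximalIdeal R ^ m))) (add_zero 1)
      have hle : AddSubgroup.closure
          {y : Ext (ModuleCat.of R (R ⧸ (IsLocalRing.maximalIdeal R ^ m))) (ModuleCat.of R (R ⧸ (IsLocalRing.maximalIdeal R ^ ℓ))) 1 | ∃ r ∈ (IsLocalRing.maximalIdeal R) ^ n,
            ∃ z : Ext (ModuleCat.of R (R ⧸ (IsLocalRing.maximalIdeal R ^ m))) (ModuleCat.of R (R ⧸ (IsLocalRing.maximalIdeal R ^ ℓ))) 1,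
              y = z.comp (Ext.mk₀ (r • 𝟙 (ModuleCat.of R (R ⧸ (IsLocalRing.maximalIdeal R ^ ℓ))))) (add_zero 1)} ≤ Φ.ker :=
        (AddSubgroup.closure_le _).mpr (by
        rintro y ⟨r, hr, z, rfl⟩
        show Φ _ = 0
        simp only [Φ, Ext.postcomp, AddMonoidHom.flip_apply, Ext.bilinearComp_apply_apply]
        rw [Ext.comp_assoc_of_third_deg_zero, Ext.mk₀_comp_mk₀,
          Linear.smul_comp, Category.id_comp, hsmul r hr χ, Ext.mk₀_zero, Ext.comp_zero]
        )
      have h0 := AddMonoidHom.mem_ker.mp (hle hclass)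
      simp only [Φ, Ext.postcomp, AddMonoidHom.flip_apply, Ext.bilinearComp_apply_apply] at h0
      exact h0
    have key2 := key (e₁.inv ≫ ψ)
    rw [Ext.comp_assoc_of_third_deg_zero, Ext.comp_assoc_of_third_deg_zero,
      Ext.mk₀_comp_mk₀, Iso.hom_inv_id_assoc] at key2
    have hvanish : hS.extClass.comp (Ext.mk₀ ψ) (add_zero 1) = 0 := by
      have h3 := congrArg (fun t => (Ext.mk₀ e₃.hom).comp t (zero_add 1)) key2
      simpa using h3
    obtain ⟨x₂, hx₂⟩ := Ext.contravariant_sequence_exact₁ hS (ModuleCat.of R (R ⧸ (IsLocalRing.maximalIdeal R ^ n))) (Ext.mk₀ ψ) rfl hvanish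
    obtain ⟨Φ, hΦ⟩ := ext0_factor S.f x₂ ψ hx₂
    exact ⟨Φ, hΦ⟩
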